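/- If n ∈ 𝔾, then the number of nonzero ideals of 𝒪_K of absolute norm n equals the product, over the rational primes p dividing n that are split in K, of (v_p(n) + 1), where v_p(n) is the p-adic valuation of n. -/

import Mathlib

open NumberField

/-- A rational prime `p` is split in `K` if `p 𝒪_K` is a product of two distinct
prime ideals. -/
def IsSplitIn (K : Type) [Field K] [NumberField K] (p : ℕ) : Prop :=
  ∃ P Q : Ideal (𝓞 K), P.IsPrime ∧ Q.IsPrime ∧ P ≠ Q ∧
    Ideal.span {(p : 𝓞 K)} = P * Q

section Aux

open Ideal

/-- Key ring-theoretic identity: if `A ⊔ B = ⊤` and `A*B ≤ I` then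
`(I ⊔ A) * (I ⊔ B) = I`. -/
lemma my_sup_mul_sup_eq {R : Type*} [CommRing R] {I A B : Ideal R}
    (hAB : A ⊔ B = ⊤) (hABI : A * B ≤ I) : (I ⊔ A) * (I ⊔ B) = I := by
  apply le_antisymm
  · rw [Ideal.sup_mul, Ideal.mul_sup, Ideal.mul_sup]
    refine sup_le (sup_le ?_ ?_) (sup_le ?_ ?_)
    · exact Ideal.mul_le_left
    · exact Ideal.mul_le_left
    · exact Ideal.mul_le_right
    · exact hABI
  · calc I = I * ⊤ := (Ideal.mul_top I).symm
    _ = I * (A ⊔ B) := by rw [hAB]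
    _ = I * A ⊔ I * B := Ideal.mul_sup I A B
    _ ≤ (I ⊔ A) * (I ⊔ B) := by
        refine sup_le ?_ ?_
        · rw [mul_comm]
          exact Ideal.mul_mono le_sup_right le_sup_left
        · exact Ideal.mul_mono le_sup_left le_sup_right

lemma my_dvd_mul_eq {a b m n : ℕ} (ha : a ∣ m) (hb : b ∣ n) (hab : a * b = m * n)
    (hmn : 0 < m * n) : a = m ∧ b = n := by
  obtain ⟨c, rfl⟩ := ha
  obtain ⟨d, rfl⟩ := hb
  have hpos : 0 < a * b := hab ▸ hmn
  have h1 : (a * b) * 1 = (a * b) * (c * d) := by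
    rw [mul_one]
    conv_lhs => rw [hab]
    ring
  have h2 := (Nat.eq_of_mul_eq_mul_left hpos h1).symm
  have hc : c = 1 := Nat.eq_one_of_mul_eq_one_right h2
  have hd : d = 1 := Nat.eq_one_of_mul_eq_one_left h2
  simp [hc, hd]

/-- divisor pair of p^2, both nontrivial, must both be p -/
lemma my_norm_eq_p {p : ℕ} (hp : p.Prime) {a b : ℕ} (hab : a * b = p ^ 2)
    (ha : a ≠ 1) (hb : b ≠ 1) : a = p ∧ b = p := by
  obtain ⟨i, hi, rfl⟩ := (Nat.dvd_prime_pow hp).mp ⟨b, hab.symm⟩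
  obtain ⟨j, hj, rfl⟩ := (Nat.dvd_prime_pow hp).mp ⟨p ^ i, by rw [mul_comm]; exact hab.symm⟩
  rw [← pow_add] at hab
  have hij := Nat.pow_right_injective hp.two_le hab
  have hi0 : i ≠ 0 := by rintro rfl; simp at ha
  have hj0 : j ≠ 0 := by rintro rfl; simp at hb
  have : i = 1 ∧ j = 1 := by omega
  rw [this.1, this.2]; simp

variable (K : Type) [Field K] [NumberField K]

lemma my_absNorm_mul' {K : Type} [Field K] [NumberField K] (I J : Ideal (𝓞 K)) :
    Ideal.absNorm (I * J) = Ideal.absNorm I * Ideal.absNorm J :=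
  _root_.map_mul Ideal.absNorm I J

lemma my_absNorm_pow' {K : Type} [Field K] [NumberField K] (I : Ideal (𝓞 K)) (k : ℕ) :
    Ideal.absNorm (I ^ k) = Ideal.absNorm I ^ k :=
  _root_.map_pow Ideal.absNorm I k

lemma my_absNorm_span_natCast (hdeg : Module.finrank ℚ K = 2) (m : ℕ) :
    Ideal.absNorm (Ideal.span {(m : 𝓞 K)}) = m ^ 2 := by
  have h1 : ((m : ℤ) : 𝓞 K) = (m : 𝓞 K) := by push_cast; ring
  rw [Ideal.absNorm_span_singleton, ← h1,
    show ((m : ℤ) : 𝓞 K) = algebraMap ℤ (𝓞 K) (m : ℤ) from rfl,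
    Algebra.norm_algebraMap_of_basis (Module.Free.chooseBasis ℤ (𝓞 K)),
    ← Module.finrank_eq_card_chooseBasisIndex, NumberField.RingOfIntegers.rank, hdeg]
  simp [Int.natAbs_pow]

variable {K}

/-- an ideal of norm `p ^ e` divides `(p) ^ e`. -/
lemma my_dvd_span_pow {p e : ℕ} {I : Ideal (𝓞 K)} (hI : Ideal.absNorm I = p ^ e) :
    I ∣ (Ideal.span {(p : 𝓞 K)}) ^ e := by
  rw [Ideal.dvd_iff_le, Ideal.span_singleton_pow, Ideal.span_le, Set.singleton_subset_iff]
  have := Ideal.absNorm_mem I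
  rw [hI] at this
  push_cast at this ⊢
  exact this

lemma my_recomb (hdeg : Module.finrank ℚ K = 2) {m n : ℕ} (h : Nat.Coprime m n)
    {J J' : Ideal (𝓞 K)} (hJ : Ideal.absNorm J = m) (hJ' : Ideal.absNorm J' = n) :
    J * J' ⊔ Ideal.span {(m : 𝓞 K)} = J := by
  set A := Ideal.span {(m : 𝓞 K)} with hA
  apply le_antisymm
  · refine sup_le Ideal.mul_le_left ?_
    rw [Ideal.span_le, Set.singleton_subset_iff]
    have := Ideal.absNorm_mem J
    rwa [hJ] at this
  · have htop : J' ⊔ A = ⊤ := by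
      rw [← Ideal.absNorm_eq_one_iff]
      have d1 : Ideal.absNorm (J' ⊔ A) ∣ n :=
        hJ' ▸ Ideal.absNorm_dvd_absNorm_of_le le_sup_left
      have d2 : Ideal.absNorm (J' ⊔ A) ∣ m ^ 2 := by
        have := Ideal.absNorm_dvd_absNorm_of_le (le_sup_right : A ≤ J' ⊔ A)
        rwa [my_absNorm_span_natCast K hdeg] at this
      have hcop : Nat.Coprime (m ^ 2) n := (Nat.Coprime.pow_left 2 h)
      have := Nat.dvd_gcd d2 d1
      rwa [Nat.Coprime.gcd_eq_one hcop, Nat.dvd_one] at this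
    calc J = J * (J' ⊔ A) := by rw [htop, Ideal.mul_top]
    _ = J * J' ⊔ J * A := Ideal.mul_sup J J' A
    _ ≤ J * J' ⊔ A := sup_le_sup_left Ideal.mul_le_right _

/-- multiplicativity of the number of ideals of given norm -/
lemma my_card_mul_of_coprime (hdeg : Module.finrank ℚ K = 2) (m n : ℕ) (hm : 0 < m)
    (hn : 0 < n) (h : Nat.Coprime m n) :
    Nat.card {I : Ideal (𝓞 K) // Ideal.absNorm I = m * n}
      = Nat.card {I : Ideal (𝓞 K) // Ideal.absNorm I = m} *
        Nat.card {I : Ideal (𝓞 K) // Ideal.absNorm I = n} := by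
  set A := Ideal.span {(m : 𝓞 K)} with hAdef
  set B := Ideal.span {(n : 𝓞 K)} with hBdef
  have hABsup : A ⊔ B = ⊤ := by
    rw [← Ideal.isCoprime_iff_sup_eq]
    refine (Ideal.isCoprime_span_singleton_iff _ _).mpr ?_
    have h1 : IsCoprime (m : ℤ) (n : ℤ) := Nat.isCoprime_iff_coprime.mpr h
    have h2 := h1.map (algebraMap ℤ (𝓞 K))
    simpa using h2
  have hnA : Ideal.absNorm A = m ^ 2 := my_absNorm_span_natCast K hdeg m
  have hnB : Ideal.absNorm B = n ^ 2 := my_absNorm_span_natCast K hdeg n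
  have key : ∀ I : Ideal (𝓞 K), Ideal.absNorm I = m * n →
      (I ⊔ A) * (I ⊔ B) = I ∧ Ideal.absNorm (I ⊔ A) = m ∧ Ideal.absNorm (I ⊔ B) = n := by
    intro I hI
    have hABle : A * B ≤ I := by
      rw [hAdef, hBdef, Ideal.span_singleton_mul_span_singleton]
      rw [Ideal.span_le, Set.singleton_subset_iff]
      have := Ideal.absNorm_mem I
      rw [hI] at this
      push_cast at this ⊢
      exact this
    have hkey : (I ⊔ A) * (I ⊔ B) = I := my_sup_mul_sup_eq hABsup hABle
    have h1 : Ideal.absNorm (I ⊔ A) * Ideal.absNorm (I ⊔ B) = m * n := by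
      rw [← my_absNorm_mul', hkey, hI]
    have dA : Ideal.absNorm (I ⊔ A) ∣ m := by
      have d1 : Ideal.absNorm (I ⊔ A) ∣ m * n :=
        hI ▸ Ideal.absNorm_dvd_absNorm_of_le le_sup_left
      have d2 : Ideal.absNorm (I ⊔ A) ∣ m * m := by
        have := Ideal.absNorm_dvd_absNorm_of_le (le_sup_right : A ≤ I ⊔ A)
        rwa [hnA, pow_two] at this
      have := Nat.dvd_gcd d2 d1
      rwa [Nat.gcd_mul_left, Nat.Coprime.gcd_eq_one h, mul_one] at this
    have dB : Ideal.absNorm (I ⊔ B) ∣ n := by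
      have d1 : Ideal.absNorm (I ⊔ B) ∣ n * m := by
        rw [mul_comm]
        exact hI ▸ Ideal.absNorm_dvd_absNorm_of_le le_sup_left
      have d2 : Ideal.absNorm (I ⊔ B) ∣ n * n := by
        have := Ideal.absNorm_dvd_absNorm_of_le (le_sup_right : B ≤ I ⊔ B)
        rwa [hnB, pow_two] at this
      have := Nat.dvd_gcd d2 d1
      rwa [Nat.gcd_mul_left, Nat.Coprime.gcd_eq_one h.symm, mul_one] at this
    obtain ⟨e1, e2⟩ := my_dvd_mul_eq dA dB h1 (Nat.mul_pos hm hn)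
    exact ⟨hkey, e1, e2⟩
  have e : {I : Ideal (𝓞 K) // Ideal.absNorm I = m * n} ≃
      {I : Ideal (𝓞 K) // Ideal.absNorm I = m} × {I : Ideal (𝓞 K) // Ideal.absNorm I = n} :=
    { toFun := fun I => (⟨I.1 ⊔ A, (key I.1 I.2).2.1⟩, ⟨I.1 ⊔ B, (key I.1 I.2).2.2⟩)
      invFun := fun J => ⟨J.1.1 * J.2.1, by rw [my_absNorm_mul', J.1.2, J.2.2]⟩
      left_inv := fun I => Subtype.ext (key I.1 I.2).1
      right_inv := fun J => by
        obtain ⟨⟨J1, hJ1⟩, ⟨J2, hJ2⟩⟩ := J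
        refine Prod.ext (Subtype.ext ?_) (Subtype.ext ?_)
        · exact my_recomb hdeg h hJ1 hJ2
        · show J1 * J2 ⊔ B = J2
          rw [mul_comm]
          exact my_recomb hdeg h.symm hJ2 hJ1 }
  rw [Nat.card_congr e, Nat.card_prod]

/-- The factorization of `(p)` in a quadratic field: inert, or a product of two
primes of norm `p`. -/
lemma my_prime_decomp (hdeg : Module.finrank ℚ K = 2) {p : ℕ} (hp : p.Prime) :
    Prime (Ideal.span {(p : 𝓞 K)}) ∨
    ∃ P Q : Ideal (𝓞 K), Prime P ∧ Prime Q ∧ Ideal.span {(p : 𝓞 K)} = P * Q ∧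
      Ideal.absNorm P = p ∧ Ideal.absNorm Q = p := by
  set A := Ideal.span {(p : 𝓞 K)} with hAdef
  have hA : Ideal.absNorm A = p ^ 2 := my_absNorm_span_natCast K hdeg p
  have hA0 : A ≠ 0 := by
    intro h0
    rw [h0] at hA
    simp only [Submodule.zero_eq_bot, Ideal.absNorm_bot] at hA
    exact (pow_ne_zero 2 hp.ne_zero) hA.symm
  by_cases hAp : Prime A
  · exact Or.inl hAp
  right
  obtain ⟨f, hfp, hfprod⟩ := UniqueFactorizationMonoid.exists_prime_factors A hA0
  have hprod : f.prod = A := associated_iff_eq.mp hfprod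
  rcases Multiset.empty_or_exists_mem f with hf0 | ⟨P, hPf⟩
  · exfalso
    rw [hf0, Multiset.prod_zero] at hprod
    rw [← hprod] at hA
    rw [Ideal.one_eq_top, Ideal.absNorm_eq_one_iff.mpr rfl] at hA
    have := hp.two_le
    nlinarith
  obtain ⟨f1, rfl⟩ := Multiset.exists_cons_of_mem hPf
  have hP : Prime P := hfp P (Multiset.mem_cons_self _ _)
  rcases Multiset.empty_or_exists_mem f1 with hf10 | ⟨Q, hQf⟩
  · exfalso
    rw [hf10] at hprod
    simp only [Multiset.cons_zero, Multiset.prod_singleton] at hprod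
    exact hAp (hprod ▸ hP)
  obtain ⟨f2, rfl⟩ := Multiset.exists_cons_of_mem hQf
  have hQ : Prime Q := hfp Q (Multiset.mem_cons_of_mem (Multiset.mem_cons_self _ _))
  rw [Multiset.prod_cons, Multiset.prod_cons] at hprod
  -- norms
  have hnorm : Ideal.absNorm P * (Ideal.absNorm Q * Ideal.absNorm f2.prod) = p ^ 2 := by
    rw [← my_absNorm_mul', ← my_absNorm_mul', hprod, hA]
  have hnP1 : Ideal.absNorm P ≠ 1 := by
    intro h1
    exact hP.not_unit (Ideal.isUnit_iff.mpr (Ideal.absNorm_eq_one_iff.mp h1))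
  have hnQ1 : Ideal.absNorm Q ≠ 1 := by
    intro h1
    exact hQ.not_unit (Ideal.isUnit_iff.mpr (Ideal.absNorm_eq_one_iff.mp h1))
  have hQf2 : Ideal.absNorm Q * Ideal.absNorm f2.prod ≠ 1 := by
    intro h1
    exact hnQ1 (Nat.eq_one_of_mul_eq_one_right h1)
  obtain ⟨hP_eq, hrest⟩ := my_norm_eq_p hp hnorm hnP1 hQf2
  -- now absNorm Q * absNorm f2.prod = p, with absNorm Q ≠ 1, so absNorm f2.prod = 1
  have hf2top : f2.prod = ⊤ := by
    rw [← Ideal.absNorm_eq_one_iff]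
    rcases (Nat.dvd_prime hp).mp ⟨Ideal.absNorm Q, by rw [mul_comm]; exact hrest.symm⟩ with h1 | h1
    · exact h1
    · exfalso
      rw [h1] at hrest
      have h2 : Ideal.absNorm Q * p = 1 * p := by rw [one_mul]; exact hrest
      exact hnQ1 (Nat.eq_of_mul_eq_mul_right hp.pos h2)
  have hQ_eq : Ideal.absNorm Q = p := by
    rw [hf2top] at hrest
    simpa using hrest
  refine ⟨P, Q, hP, hQ, ?_, hP_eq, hQ_eq⟩
  rw [← hprod, hf2top]
  simp [Ideal.one_eq_top]

end Aux

open Ideal in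
/-- Counting ideals of norm `p^e` in the split case. -/
lemma my_card_split {K : Type} [Field K] [NumberField K]
    {p : ℕ} (hp : p.Prime) {P Q : Ideal (𝓞 K)} (hP : Prime P) (hQ : Prime Q)
    (hne : P ≠ Q) (hspan : Ideal.span {(p : 𝓞 K)} = P * Q)
    (hnP : Ideal.absNorm P = p) (hnQ : Ideal.absNorm Q = p) (e : ℕ) :
    Nat.card {I : Ideal (𝓞 K) // Ideal.absNorm I = p ^ e} = e + 1 := by
  have hPQne : ∀ a b : ℕ, b ≠ 0 → ¬ (P ^ (a + 1) ∣ P ^ a * Q ^ b) := by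
    intro a b hb hdvd
    rw [pow_succ] at hdvd
    have hPa : P ^ a ≠ 0 := pow_ne_zero a hP.ne_zero
    rw [mul_dvd_mul_iff_left hPa] at hdvd
    have hPQ : P ∣ Q := hP.dvd_of_dvd_pow hdvd
    obtain ⟨c, rfl⟩ := hPQ
    rcases hQ.irreducible.isUnit_or_isUnit rfl with h | h
    · exact hP.not_unit h
    · rw [Ideal.isUnit_iff.mp h, Ideal.mul_top] at hne
      exact hne rfl
  have hinj : ∀ {a b : ℕ}, a ≤ e → b ≤ e → P ^ a * Q ^ (e - a) = P ^ b * Q ^ (e - b) → a = b := by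
    intro a b ha hb heq
    by_contra hab
    rcases Nat.lt_or_ge a b with hlt | hge
    · refine hPQne a (e - a) (show e - a ≠ 0 by omega) ?_
      rw [heq]
      exact dvd_mul_of_dvd_left (pow_dvd_pow P (by omega)) _
    · have hlt : b < a := by omega
      refine hPQne b (e - b) (show e - b ≠ 0 by omega) ?_
      rw [← heq]
      exact dvd_mul_of_dvd_left (pow_dvd_pow P (by omega)) _
  have hfn : ∀ a : Fin (e + 1), Ideal.absNorm (P ^ (a : ℕ) * Q ^ (e - (a : ℕ))) = p ^ e := by
    intro a
    rw [my_absNorm_mul', my_absNorm_pow', my_absNorm_pow', hnP, hnQ, ← pow_add]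
    congr 1
    omega
  have := Nat.card_eq_of_bijective
    (f := fun a : Fin (e + 1) =>
      (⟨P ^ (a : ℕ) * Q ^ (e - (a : ℕ)), hfn a⟩ : {I : Ideal (𝓞 K) // Ideal.absNorm I = p ^ e}))
    ?_
  · rw [← this, Nat.card_eq_fintype_card, Fintype.card_fin]
  constructor
  · intro a b hab
    have := hinj (Nat.lt_succ_iff.mp a.2) (Nat.lt_succ_iff.mp b.2) (congrArg Subtype.val hab)
    exact Fin.ext this
  · rintro ⟨I, hI⟩
    -- I divides P^e * Q^e
    have hIdvd : I ∣ P ^ e * Q ^ e := by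
      have := my_dvd_span_pow hI
      rwa [hspan, mul_pow] at this
    have hPm : (P).IsMaximal :=
      Ideal.IsPrime.isMaximal (Ideal.isPrime_of_prime hP) hP.ne_zero
    have hQm : (Q).IsMaximal :=
      Ideal.IsPrime.isMaximal (Ideal.isPrime_of_prime hQ) hQ.ne_zero
    have hPQtop : P ^ e ⊔ Q ^ e = ⊤ := by
      rw [← Ideal.isCoprime_iff_sup_eq]
      exact (Ideal.isCoprime_iff_sup_eq.mpr (hPm.coprime_of_ne hQm hne)).pow
    have hkey : (I ⊔ P ^ e) * (I ⊔ Q ^ e) = I :=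
      my_sup_mul_sup_eq hPQtop (Ideal.dvd_iff_le.mp hIdvd)
    obtain ⟨i, hi, hPi⟩ := (dvd_prime_pow hP e).mp (Ideal.dvd_iff_le.mpr le_sup_right)
    obtain ⟨j, hj, hQj⟩ := (dvd_prime_pow hQ e).mp (Ideal.dvd_iff_le.mpr le_sup_right)
    rw [associated_iff_eq] at hPi hQj
    rw [hPi, hQj] at hkey
    have hnorm : p ^ (i + j) = p ^ e := by
      calc p ^ (i + j) = Ideal.absNorm (P ^ i * Q ^ j) := by
            rw [my_absNorm_mul', my_absNorm_pow', my_absNorm_pow', hnP, hnQ, pow_add]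
      _ = p ^ e := by rw [hkey, hI]
    have hij : i + j = e := Nat.pow_right_injective hp.two_le hnorm
    refine ⟨⟨i, by omega⟩, Subtype.ext ?_⟩
    show P ^ i * Q ^ (e - i) = I
    rw [show e - i = j by omega, ← hkey]

open Ideal in
/-- In the non-split case there is at most one ideal of norm `p^e`. -/
lemma my_nonsplit_subsingleton {K : Type} [Field K] [NumberField K]
    (hdeg : Module.finrank ℚ K = 2) {p : ℕ} (hp : p.Prime) (hns : ¬ IsSplitIn K p) (e : ℕ) :
    Subsingleton {I : Ideal (𝓞 K) // Ideal.absNorm I = p ^ e} := by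
  rcases my_prime_decomp hdeg hp (K := K) with hin | ⟨P, Q, hP, hQ, hspan, hnP, hnQ⟩
  · -- inert case
    constructor
    rintro ⟨I, hI⟩ ⟨J, hJ⟩
    have key : ∀ {I : Ideal (𝓞 K)}, Ideal.absNorm I = p ^ e →
        ∃ i, I = (Ideal.span {(p : 𝓞 K)}) ^ i ∧ 2 * i = e := by
      intro I hI
      obtain ⟨i, hi, hIi⟩ := (dvd_prime_pow hin e).mp (my_dvd_span_pow hI)
      rw [associated_iff_eq] at hIi
      refine ⟨i, hIi, ?_⟩
      have : Ideal.absNorm ((Ideal.span {(p : 𝓞 K)}) ^ i) = p ^ e := hIi ▸ hI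
      rw [my_absNorm_pow', my_absNorm_span_natCast K hdeg, ← pow_mul] at this
      exact Nat.pow_right_injective hp.two_le this
    obtain ⟨i, hi1, hi2⟩ := key hI
    obtain ⟨j, hj1, hj2⟩ := key hJ
    have : i = j := by omega
    exact Subtype.ext (show I = J by rw [hi1, hj1, this])
  · -- ramified case : P = Q forced
    have hPQ : P = Q := by
      by_contra hne
      exact hns ⟨P, Q, Ideal.isPrime_of_prime hP, Ideal.isPrime_of_prime hQ, hne, hspan⟩
    subst hPQ
    constructor
    rintro ⟨I, hI⟩ ⟨J, hJ⟩
    have key : ∀ {I : Ideal (𝓞 K)}, Ideal.absNorm I = p ^ e → I = P ^ e := by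
      intro I hI
      have hdvd : I ∣ P ^ (2 * e) := by
        have := my_dvd_span_pow hI
        rwa [hspan, ← pow_two, ← pow_mul] at this
      obtain ⟨i, hi, hIi⟩ := (dvd_prime_pow hP (2 * e)).mp hdvd
      rw [associated_iff_eq] at hIi
      have : Ideal.absNorm (P ^ i) = p ^ e := hIi ▸ hI
      rw [my_absNorm_pow', hnP] at this
      have : i = e := Nat.pow_right_injective hp.two_le this
      rw [hIi, this]
    exact Subtype.ext (show I = J by rw [key hI, key hJ])

open Ideal in
lemma my_card_one {K : Type} [Field K] [NumberField K] :
    Nat.card {I : Ideal (𝓞 K) // Ideal.absNorm I = 1} = 1 := by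
  have : Unique {I : Ideal (𝓞 K) // Ideal.absNorm I = 1} :=
    { default := ⟨⊤, Ideal.absNorm_eq_one_iff.mpr rfl⟩
      uniq := fun x => Subtype.ext (Ideal.absNorm_eq_one_iff.mp x.2) }
  exact Nat.card_unique

open Ideal in
/-- Main product formula over the prime factors. -/
lemma my_card_eq_prod {K : Type} [Field K] [NumberField K]
    (hdeg : Module.finrank ℚ K = 2) :
    ∀ n : ℕ, 0 < n → Nat.card {I : Ideal (𝓞 K) // Ideal.absNorm I = n} =
      ∏ p ∈ n.primeFactors, Nat.card
        {I : Ideal (𝓞 K) // Ideal.absNorm I = p ^ n.factorization p} := by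
  intro n
  induction n using Nat.strong_induction_on with
  | _ n ih =>
    intro hn
    rcases eq_or_lt_of_le (show 1 ≤ n from hn) with h1 | h1
    · rw [← h1]
      simp [my_card_one]
    · -- n > 1
      set p := n.minFac with hpdef
      have hp : p.Prime := Nat.minFac_prime (by omega)
      have hpd : p ∣ n := Nat.minFac_dvd n
      have hn0 : n ≠ 0 := by omega
      set e := n.factorization p with hedef
      set m := n / p ^ e with hmdef
      have hsplit : p ^ e * m = n := Nat.ordProj_mul_ordCompl_eq_self n p
      have hm0 : 0 < m := Nat.ordCompl_pos p hn0
      have hcop : Nat.Coprime (p ^ e) m :=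
        Nat.Coprime.pow_left e (Nat.coprime_ordCompl hp hn0)
      have he1 : 1 ≤ e := (Nat.Prime.factorization_pos_of_dvd hp hn0 hpd)
      have hmn : m < n := by
        have h2 : 2 ≤ p ^ e := by
          calc 2 ≤ p := hp.two_le
          _ ≤ p ^ e := Nat.le_self_pow (by omega) p
        nlinarith
      have hmem : p ∈ n.primeFactors := Nat.mem_primeFactors.mpr ⟨hp, hpd, hn0⟩
      have hfacm : m.factorization = n.factorization.erase p := Nat.factorization_ordCompl n p
      have hpfm : m.primeFactors = n.primeFactors.erase p := by
        rw [← Nat.support_factorization, hfacm, Finsupp.support_erase,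
          Nat.support_factorization]
      calc Nat.card {I : Ideal (𝓞 K) // Ideal.absNorm I = n}
          = Nat.card {I : Ideal (𝓞 K) // Ideal.absNorm I = p ^ e * m} := by rw [hsplit]
        _ = Nat.card {I : Ideal (𝓞 K) // Ideal.absNorm I = p ^ e} *
            Nat.card {I : Ideal (𝓞 K) // Ideal.absNorm I = m} :=
            my_card_mul_of_coprime hdeg _ _ (Nat.pow_pos (n := e) hp.pos) hm0 hcop
        _ = Nat.card {I : Ideal (𝓞 K) // Ideal.absNorm I = p ^ e} *
            ∏ q ∈ m.primeFactors, Nat.card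
              {I : Ideal (𝓞 K) // Ideal.absNorm I = q ^ m.factorization q} := by
            rw [ih m hmn hm0]
        _ = Nat.card {I : Ideal (𝓞 K) // Ideal.absNorm I = p ^ e} *
            ∏ q ∈ n.primeFactors.erase p, Nat.card
              {I : Ideal (𝓞 K) // Ideal.absNorm I = q ^ n.factorization q} := by
            rw [hpfm]
            congr 1
            refine Finset.prod_congr rfl ?_
            intro q hq
            have hqp : q ≠ p := (Finset.mem_erase.mp hq).1
            rw [hfacm, Finsupp.erase_ne hqp]
        _ = ∏ q ∈ n.primeFactors, Nat.card
              {I : Ideal (𝓞 K) // Ideal.absNorm I = q ^ n.factorization q} :=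
            Finset.mul_prod_erase n.primeFactors
              (fun q => Nat.card {I : Ideal (𝓞 K) // Ideal.absNorm I = q ^ n.factorization q})
              hmem

open scoped Classical in
theorem stmt9 (K : Type) [Field K] [NumberField K]
    (hdeg : Module.finrank ℚ K = 2)
    (himg : ∀ v : InfinitePlace K, v.IsComplex)
    (n : ℕ) (hn : 0 < n)
    (hG : ∃ I : Ideal (𝓞 K), I ≠ 0 ∧ Ideal.absNorm I = n) :
    Nat.card {I : Ideal (𝓞 K) // I ≠ 0 ∧ Ideal.absNorm I = n} =
      ∏ p ∈ n.primeFactors.filter (fun p => IsSplitIn K p), (n.factorization p + 1) := by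
  have hfin : ∀ m : ℕ, Finite {I : Ideal (𝓞 K) // Ideal.absNorm I = m} := fun m =>
    (Ideal.finite_setOf_absNorm_eq m).to_subtype
  have hstep0 : Nat.card {I : Ideal (𝓞 K) // I ≠ 0 ∧ Ideal.absNorm I = n} =
      Nat.card {I : Ideal (𝓞 K) // Ideal.absNorm I = n} := by
    refine Nat.card_congr (Equiv.subtypeEquivRight fun I => ?_)
    constructor
    · exact fun h => h.2
    · intro h
      refine ⟨?_, h⟩
      rintro rfl
      rw [show Ideal.absNorm (0 : Ideal (𝓞 K)) = 0 from by simp] at h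
      omega
  rw [hstep0, my_card_eq_prod hdeg n hn]
  -- every local factor is nonzero
  have hpos : Nat.card {I : Ideal (𝓞 K) // Ideal.absNorm I = n} ≠ 0 := by
    obtain ⟨I, hI0, hIn⟩ := hG
    have : Nonempty {I : Ideal (𝓞 K) // Ideal.absNorm I = n} := ⟨⟨I, hIn⟩⟩
    have := hfin n
    exact Nat.card_ne_zero.mpr ⟨‹_›, ‹_›⟩
  rw [my_card_eq_prod hdeg n hn] at hpos
  have hne : ∀ p ∈ n.primeFactors,
      Nat.card {I : Ideal (𝓞 K) // Ideal.absNorm I = p ^ n.factorization p} ≠ 0 := by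
    intro p hp h0
    exact hpos (Finset.prod_eq_zero hp h0)
  rw [← Finset.prod_filter_mul_prod_filter_not n.primeFactors (fun p => IsSplitIn K p)]
  have hsplitcard : ∀ p ∈ n.primeFactors.filter (fun p => IsSplitIn K p),
      Nat.card {I : Ideal (𝓞 K) // Ideal.absNorm I = p ^ n.factorization p} =
        n.factorization p + 1 := by
    intro p hpmem
    obtain ⟨hpf, hsp⟩ := Finset.mem_filter.mp hpmem
    have hp : p.Prime := Nat.prime_of_mem_primeFactors hpf
    obtain ⟨P, Q, hPp, hQp, hPQ, hspan⟩ := hsp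
    have hspan0 : Ideal.span {(p : 𝓞 K)} ≠ 0 := by
      intro h0
      have := my_absNorm_span_natCast K hdeg p
      rw [h0] at this
      simp only [Submodule.zero_eq_bot, Ideal.absNorm_bot] at this
      exact (pow_ne_zero 2 hp.ne_zero) this.symm
    have hPne : P ≠ 0 := by
      rintro rfl
      rw [hspan] at hspan0
      simp at hspan0
    have hQne : Q ≠ 0 := by
      rintro rfl
      rw [hspan] at hspan0
      simp at hspan0
    have hPprime : Prime P := Ideal.prime_of_isPrime hPne hPp
    have hQprime : Prime Q := Ideal.prime_of_isPrime hQne hQp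
    have hnorm : Ideal.absNorm P * Ideal.absNorm Q = p ^ 2 := by
      rw [← my_absNorm_mul', ← hspan, my_absNorm_span_natCast K hdeg]
    have hnP1 : Ideal.absNorm P ≠ 1 := fun h1 =>
      hPprime.not_unit (Ideal.isUnit_iff.mpr (Ideal.absNorm_eq_one_iff.mp h1))
    have hnQ1 : Ideal.absNorm Q ≠ 1 := fun h1 =>
      hQprime.not_unit (Ideal.isUnit_iff.mpr (Ideal.absNorm_eq_one_iff.mp h1))
    obtain ⟨hnP, hnQ⟩ := my_norm_eq_p hp hnorm hnP1 hnQ1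
    exact my_card_split hp hPprime hQprime hPQ hspan hnP hnQ _
  have hnonsplitcard : ∀ p ∈ n.primeFactors.filter (fun p => ¬ IsSplitIn K p),
      Nat.card {I : Ideal (𝓞 K) // Ideal.absNorm I = p ^ n.factorization p} = 1 := by
    intro p hpmem
    obtain ⟨hpf, hns⟩ := Finset.mem_filter.mp hpmem
    have hp : p.Prime := Nat.prime_of_mem_primeFactors hpf
    have hsub := my_nonsplit_subsingleton hdeg hp hns (n.factorization p)
    have h0 := hne p hpf
    rw [Nat.card_eq_one_iff_unique]
    exact ⟨hsub, (Nat.card_ne_zero.mp h0).1⟩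
  rw [Finset.prod_congr rfl hsplitcard, Finset.prod_congr rfl hnonsplitcard]
  simp
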